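/- The formal power series identity (1-4t²)·∑_{i=0}^{⌊(n-2)/2⌋}(-1)^i·C(n-2-i,i)·t^{2i} = (1-4t²)·∏_{i=1}^{n-2}(1 - 2cos(iπ/(n-1))·t) holds for n ≥ 3; that is, ∑_{i=0}^{⌊(n-2)/2⌋}(-1)^i·C(n-2-i,i)·t^{2i} = ∏_{i=1}^{n-2}(1 - 2cos(iπ/(n-1))·t). -/

import Mathlib

open Real

noncomputable def Feval (m : ℕ) (t : ℝ) : ℝ :=
  ∑ i ∈ Finset.range (m / 2 + 1), (-1 : ℝ) ^ i * ((m - i).choose i : ℝ) * t ^ (2 * i)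

lemma Frec (m : ℕ) (t : ℝ) : Feval (m + 2) t = Feval (m + 1) t - t ^ 2 * Feval m t := by
  have hE1 : Feval (m + 1) t
      = ∑ i ∈ Finset.range (m / 2 + 2), (-1 : ℝ) ^ i * ((m + 1 - i).choose i : ℝ) * t ^ (2 * i) := by
    rcases Nat.even_or_odd m with h | h
    · obtain ⟨k, rfl⟩ := h
      have h1 : (k + k + 1) / 2 + 1 = k + 1 := by omega
      have h2 : (k + k) / 2 + 2 = k + 1 + 1 := by omega
      rw [Feval, h1, h2]
      conv_rhs => rw [Finset.sum_range_succ]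
      have hc0 : (k + k + 1 - (k + 1)).choose (k + 1) = 0 :=
        Nat.choose_eq_zero_of_lt (by omega)
      rw [hc0]
      norm_num
    · obtain ⟨k, rfl⟩ := h
      have h1 : (2 * k + 1 + 1) / 2 + 1 = (2 * k + 1) / 2 + 2 := by omega
      rw [Feval, h1]
  rw [hE1, Feval, Feval]
  have hr : (m + 2) / 2 + 1 = m / 2 + 2 := by omega
  rw [hr]
  rw [Finset.sum_range_succ' (fun i => (-1 : ℝ) ^ i * ((m + 2 - i).choose i : ℝ) * t ^ (2 * i)) (m / 2 + 1),
      Finset.sum_range_succ' (fun i => (-1 : ℝ) ^ i * ((m + 1 - i).choose i : ℝ) * t ^ (2 * i)) (m / 2 + 1)]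
  rw [Finset.mul_sum]
  have hcong : ∀ i ∈ Finset.range (m / 2 + 1),
      (-1 : ℝ) ^ (i + 1) * ((m + 2 - (i + 1)).choose (i + 1) : ℝ) * t ^ (2 * (i + 1))
        = (-1 : ℝ) ^ (i + 1) * ((m + 1 - (i + 1)).choose (i + 1) : ℝ) * t ^ (2 * (i + 1))
          - t ^ 2 * ((-1 : ℝ) ^ i * ((m - i).choose i : ℝ) * t ^ (2 * i)) := by
    intro i hi
    simp only [Finset.mem_range] at hi
    have e1 : m + 2 - (i + 1) = (m - i) + 1 := by omega
    have e2 : m + 1 - (i + 1) = m - i := by omega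
    rw [e1, e2, Nat.choose_succ_succ]
    have e3 : 2 * (i + 1) = 2 * i + 2 := by ring
    rw [e3, pow_add]
    push_cast
    ring
  rw [Finset.sum_congr rfl hcong, Finset.sum_sub_distrib]
  simp only [Nat.choose_zero_right]
  push_cast
  ring

lemma Hlem (m : ℕ) : ∀ θ : ℝ, Real.cos θ ≠ 0 →
    Feval m (1 / (2 * Real.cos θ)) * Real.sin θ * (2 * Real.cos θ) ^ m
      = Real.sin ((m + 1) * θ) := by
  induction m using Nat.twoStepInduction with
  | zero =>
    intro θ h
    simp [Feval]
  | one =>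
    intro θ h
    have h1 : Feval 1 (1 / (2 * Real.cos θ)) = 1 := by simp [Feval]
    rw [h1]
    rw [show ((1 : ℕ) + 1 : ℝ) * θ = 2 * θ by push_cast; ring, Real.sin_two_mul]
    ring
  | more m ih1 ih2 =>
    intro θ h
    have h2 : (2 * Real.cos θ) ≠ 0 := mul_ne_zero two_ne_zero h
    have key : Real.sin (((m : ℝ) + 3) * θ)
        = 2 * Real.cos θ * Real.sin (((m : ℝ) + 2) * θ) - Real.sin (((m : ℝ) + 1) * θ) := by
      have e1 : ((m : ℝ) + 3) * θ = ((m : ℝ) + 2) * θ + θ := by ring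
      have e2 : ((m : ℝ) + 1) * θ = ((m : ℝ) + 2) * θ - θ := by ring
      rw [e1, e2, Real.sin_add, Real.sin_sub]
      ring
    have hcast : ((m + 2 : ℕ) + 1 : ℝ) = (m : ℝ) + 3 := by push_cast; ring
    rw [Frec, hcast, key]
    have i1 := ih1 θ h
    have i2 := ih2 θ h
    have hc1 : ((m : ℕ) + 1 : ℝ) = (m : ℝ) + 1 := by push_cast; ring
    have hc2 : ((m + 1 : ℕ) + 1 : ℝ) = (m : ℝ) + 2 := by push_cast; ring
    rw [hc1] at i1
    rw [hc2] at i2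
    have hs : (1 / (2 * Real.cos θ)) ^ 2 * (2 * Real.cos θ) ^ 2 = 1 := by
      field_simp
    calc (Feval (m + 1) (1 / (2 * Real.cos θ)) - (1 / (2 * Real.cos θ)) ^ 2 * Feval m (1 / (2 * Real.cos θ)))
          * Real.sin θ * (2 * Real.cos θ) ^ (m + 2)
        = (Feval (m + 1) (1 / (2 * Real.cos θ)) * Real.sin θ * (2 * Real.cos θ) ^ (m + 1)) * (2 * Real.cos θ)
          - ((1 / (2 * Real.cos θ)) ^ 2 * (2 * Real.cos θ) ^ 2)
            * (Feval m (1 / (2 * Real.cos θ)) * Real.sin θ * (2 * Real.cos θ) ^ m) := by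
          ring
      _ = 2 * Real.cos θ * Real.sin (((m : ℝ) + 2) * θ) - Real.sin (((m : ℝ) + 1) * θ) := by
          rw [i1, i2, hs]; ring

lemma main_aux (m : ℕ) (t : ℝ) :
    (∑ i ∈ Finset.range (m / 2 + 1), (-1 : ℝ) ^ i * ((m - i).choose i : ℝ) * t ^ (2 * i))
      = ∏ k ∈ Finset.Icc 1 m, (1 - 2 * Real.cos (k * Real.pi / (m + 1)) * t) := by
  classical
  set c : ℕ → ℝ := fun k => Real.cos (k * Real.pi / (m + 1)) with hc
  set F : Polynomial ℝ := ∑ i ∈ Finset.range (m / 2 + 1),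
    Polynomial.C ((-1 : ℝ) ^ i * ((m - i).choose i : ℝ)) * Polynomial.X ^ (2 * i) with hF
  set G : Polynomial ℝ := ∏ k ∈ Finset.Icc 1 m,
    (1 - Polynomial.C (2 * c k) * Polynomial.X) with hG
  have hFe : ∀ s : ℝ, F.eval s = Feval m s := by
    intro s
    simp [hF, Feval, Polynomial.eval_finset_sum]
  have hGe : ∀ s : ℝ, G.eval s = ∏ k ∈ Finset.Icc 1 m, (1 - 2 * c k * s) := by
    intro s
    simp [hG, Polynomial.eval_prod]
  set S : Finset ℕ := (Finset.Icc 1 m).filter (fun k => c k ≠ 0) with hS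
  set pts : Finset ℝ := insert (0 : ℝ) (S.image fun k => 1 / (2 * c k)) with hpts
  have hθmem : ∀ k ∈ Finset.Icc 1 m, 0 < (k : ℝ) * Real.pi / (m + 1) ∧
      (k : ℝ) * Real.pi / (m + 1) < Real.pi := by
    intro k hk
    simp only [Finset.mem_Icc] at hk
    have hk1 : (1 : ℝ) ≤ (k : ℝ) := by exact_mod_cast hk.1
    have hkm : (k : ℝ) ≤ (m : ℝ) := by exact_mod_cast hk.2
    have hm1 : (0 : ℝ) < (m : ℝ) + 1 := by positivity
    have hπ := Real.pi_pos
    constructor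
    · positivity
    · rw [div_lt_iff₀ hm1]
      nlinarith
  have hFroot : ∀ k ∈ S, F.eval (1 / (2 * c k)) = 0 := by
    intro k hk
    simp only [hS, Finset.mem_filter] at hk
    obtain ⟨hk1, hk2⟩ := hk
    obtain ⟨hθ0, hθπ⟩ := hθmem k hk1
    have hsin : Real.sin ((k : ℝ) * Real.pi / (m + 1)) ≠ 0 :=
      ne_of_gt (Real.sin_pos_of_pos_of_lt_pi hθ0 hθπ)
    have hH := Hlem m ((k : ℝ) * Real.pi / (m + 1)) hk2
    have hm1 : ((m : ℝ) + 1) ≠ 0 := by positivity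
    have hang : ((m : ℝ) + 1) * ((k : ℝ) * Real.pi / (m + 1)) = (k : ℝ) * Real.pi := by
      field_simp
    have hcast : ((m : ℕ) + 1 : ℝ) = (m : ℝ) + 1 := by push_cast; ring
    rw [hcast, hang, Real.sin_nat_mul_pi] at hH
    have h2c : (2 * c k) ^ m ≠ 0 := pow_ne_zero _ (mul_ne_zero two_ne_zero hk2)
    rw [hFe]
    rcases mul_eq_zero.mp hH with h' | h'
    · rcases mul_eq_zero.mp h' with h'' | h''
      · exact h''
      · exact absurd h'' hsin
    · exact absurd h' h2c
  have hGroot : ∀ k ∈ S, G.eval (1 / (2 * c k)) = 0 := by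
    intro k hk
    simp only [hS, Finset.mem_filter] at hk
    rw [hGe]
    apply Finset.prod_eq_zero hk.1
    have h2c : (2 : ℝ) * c k ≠ 0 := mul_ne_zero two_ne_zero hk.2
    field_simp
    rw [div_self hk.2, sub_self]
  have hF0 : F.eval 0 = 1 := by
    rw [hFe, Feval, Finset.sum_eq_single 0]
    · simp
    · intro i _ hi
      have h2i : 2 * i ≠ 0 := by omega
      simp [zero_pow h2i]
    · intro h
      exact absurd (Finset.mem_range.mpr (by omega)) h
  have hG0 : G.eval 0 = 1 := by
    rw [hGe]
    simp
  have hcinj : ∀ k ∈ S, ∀ l ∈ S, c k = c l → k = l := by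
    intro k hk l hl hkl
    simp only [hS, Finset.mem_filter] at hk hl
    have h1 := hθmem k hk.1
    have h2 := hθmem l hl.1
    have hco := Real.injOn_cos (Set.mem_Icc.mpr ⟨le_of_lt h1.1, le_of_lt h1.2⟩)
      (Set.mem_Icc.mpr ⟨le_of_lt h2.1, le_of_lt h2.2⟩) hkl
    have hm1 : ((m : ℝ) + 1) ≠ 0 := by positivity
    have hπ : Real.pi ≠ 0 := ne_of_gt Real.pi_pos
    have hkl' : (k : ℝ) = l := by
      field_simp at hco
      exact_mod_cast hco
    exact_mod_cast hkl'
  have hinj : Set.InjOn (fun k => 1 / (2 * c k)) S := by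
    intro k hk l hl hkl
    simp only [Finset.coe_mem, Finset.mem_coe] at hk hl
    have hck : c k ≠ 0 := by
      have := hk; rw [hS] at this; simp only [Finset.mem_coe, Finset.mem_filter] at this
      exact this.2
    have hcl : c l ≠ 0 := by
      have := hl; rw [hS] at this; simp only [Finset.mem_coe, Finset.mem_filter] at this
      exact this.2
    apply hcinj k (by simpa using hk) l (by simpa using hl)
    simp only at hkl
    field_simp at hkl
    linarith
  have hcard_img : (S.image fun k => 1 / (2 * c k)).card = S.card :=
    Finset.card_image_of_injOn hinj
  have h0not : (0 : ℝ) ∉ S.image fun k => 1 / (2 * c k) := by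
    simp only [Finset.mem_image, not_exists]
    intro k
    rintro ⟨hk, hk0⟩
    have hck : c k ≠ 0 := by
      rw [hS] at hk; simp only [Finset.mem_filter] at hk; exact hk.2
    have h2c : (2 : ℝ) * c k ≠ 0 := mul_ne_zero two_ne_zero hck
    rw [div_eq_zero_iff] at hk0
    rcases hk0 with h' | h'
    · norm_num at h'
    · exact h2c h'
  have hcard_pts : pts.card = S.card + 1 := by
    rw [hpts, Finset.card_insert_of_notMem h0not, hcard_img]
  have hczero : ∀ k ∈ Finset.Icc 1 m, (c k = 0 ↔ 2 * k = m + 1) := by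
    intro k hk
    obtain ⟨hθ0, hθπ⟩ := hθmem k hk
    have hπ := Real.pi_pos
    have hm1 : ((m : ℝ) + 1) ≠ 0 := by positivity
    constructor
    · intro h
      rw [hc] at h
      simp only at h
      rw [Real.cos_eq_zero_iff] at h
      obtain ⟨j, hj⟩ := h
      rw [hj] at hθ0 hθπ
      have hj0 : j = 0 := by
        by_contra hne
        rcases lt_or_gt_of_ne hne with hlt | hgt
        · have hj1' : j ≤ -1 := by omega
          have hj1 : (j : ℝ) ≤ -1 := by exact_mod_cast hj1'
          nlinarith
        · have hj1 : (1 : ℝ) ≤ (j : ℝ) := by exact_mod_cast hgt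
          nlinarith
      subst hj0
      simp only [Int.cast_zero, mul_zero, zero_add, one_mul] at hj
      have h2 : (k : ℝ) * Real.pi * 2 = ((m : ℝ) + 1) * Real.pi := by
        field_simp at hj
        rw [← hj]; ring
      have h4 : (2 * (k : ℝ)) * Real.pi = ((m : ℝ) + 1) * Real.pi := by linarith
      have h5 : (2 * (k : ℝ)) = (m : ℝ) + 1 := mul_right_cancel₀ (ne_of_gt hπ) h4
      exact_mod_cast h5
    · intro h
      have h' : (2 * k : ℝ) = (m : ℝ) + 1 := by exact_mod_cast h
      have heq : (k : ℝ) * Real.pi / (m + 1) = Real.pi / 2 := by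
        rw [div_eq_div_iff hm1 (by norm_num : (2:ℝ) ≠ 0)]
        nlinarith
      rw [hc]
      simp only
      rw [heq, Real.cos_pi_div_two]
  have hScard : S.card = if m % 2 = 0 then m else m - 1 := by
    rcases Nat.even_or_odd m with he | ho
    · obtain ⟨r, hr⟩ := he
      have hfil : S = Finset.Icc 1 m := by
        rw [hS]
        apply Finset.filter_true_of_mem
        intro k hk h0
        have := (hczero k hk).mp h0
        omega
      rw [hfil, Nat.card_Icc, if_pos (by omega)]
      omega
    · obtain ⟨r, hr⟩ := ho
      have hfil : S = (Finset.Icc 1 m).erase (r + 1) := by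
        ext k
        simp only [hS, Finset.mem_filter, Finset.mem_erase]
        constructor
        · rintro ⟨hk, hck⟩
          refine ⟨?_, hk⟩
          intro hke
          subst hke
          exact hck ((hczero _ hk).mpr (by omega))
        · rintro ⟨hne, hk⟩
          refine ⟨hk, fun h0 => hne ?_⟩
          have := (hczero _ hk).mp h0
          omega
      rw [hfil, Finset.card_erase_of_mem (by simp only [Finset.mem_Icc]; omega), Nat.card_Icc,
        if_neg (by omega)]
      omega
  have hdF : F.natDegree ≤ S.card := by
    have hb : 2 * (m / 2) ≤ S.card := by
      rw [hScard]
      split_ifs <;> omega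
    rw [hF]
    apply Polynomial.natDegree_sum_le_of_forall_le
    intro i hi
    simp only [Finset.mem_range] at hi
    refine (Polynomial.natDegree_C_mul_le _ _).trans ?_
    rw [Polynomial.natDegree_X_pow]
    omega
  have hdG : G.natDegree ≤ S.card := by
    rw [hG]
    refine (Polynomial.natDegree_prod_le _ _).trans ?_
    have hle : ∀ k ∈ Finset.Icc 1 m,
        (1 - Polynomial.C (2 * c k) * Polynomial.X).natDegree ≤ if c k ≠ 0 then 1 else 0 := by
      intro k hk
      by_cases hck : c k = 0
      · simp [hck]
      · rw [if_pos hck]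
        refine (Polynomial.natDegree_sub_le _ _).trans ?_
        simp only [Polynomial.natDegree_one]
        rw [max_le_iff]
        refine ⟨by omega, (Polynomial.natDegree_C_mul_le _ _).trans ?_⟩
        simp [Polynomial.natDegree_X]
    refine (Finset.sum_le_sum hle).trans ?_
    rw [hS, Finset.card_filter]
  have hD : F - G = 0 := by
    apply Polynomial.eq_zero_of_natDegree_lt_card_of_eval_eq_zero' (F - G) pts
    · intro x hx
      rw [hpts, Finset.mem_insert] at hx
      rcases hx with rfl | hx
      · rw [Polynomial.eval_sub, hF0, hG0, sub_self]
      · rw [Finset.mem_image] at hx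
        obtain ⟨k, hk, rfl⟩ := hx
        rw [Polynomial.eval_sub, hFroot k hk, hGroot k hk, sub_self]
    · calc (F - G).natDegree ≤ max F.natDegree G.natDegree := Polynomial.natDegree_sub_le _ _
        _ ≤ S.card := max_le hdF hdG
        _ < pts.card := by omega
  have hFG : F = G := sub_eq_zero.mp hD
  calc (∑ i ∈ Finset.range (m / 2 + 1), (-1 : ℝ) ^ i * ((m - i).choose i : ℝ) * t ^ (2 * i))
      = Feval m t := rfl
    _ = F.eval t := (hFe t).symm
    _ = G.eval t := by rw [hFG]
    _ = ∏ k ∈ Finset.Icc 1 m, (1 - 2 * c k * t) := hGe t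

/-- For `n ≥ 3`,
`∑_{i=0}^{⌊(n-2)/2⌋} (-1)^i C(n-2-i, i) t^{2i} = ∏_{i=1}^{n-2} (1 - 2 cos(iπ/(n-1)) t)`. -/
theorem sum_eq_prod_cos (n : ℕ) (hn : 3 ≤ n) (t : ℝ) :
    (∑ i ∈ Finset.range ((n - 2) / 2 + 1),
        (-1 : ℝ) ^ i * ((n - 2 - i).choose i : ℝ) * t ^ (2 * i)) =
      ∏ i ∈ Finset.Icc 1 (n - 2), (1 - 2 * Real.cos (i * Real.pi / (n - 1)) * t) := by
  have h := main_aux (n - 2) t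
  have hn1 : ((n : ℝ) - 1) = ((n - 2 : ℕ) : ℝ) + 1 := by
    have h2 : (2 : ℕ) ≤ n := by omega
    push_cast [Nat.cast_sub h2]
    ring
  rw [hn1]
  exact h
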